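/- Let d ≥ 1, σ > 0, let ρ : ℝ^d → (0,∞) be a strictly positive measurable function, let L ∈ ℝ^{d×d} be invertible, c ∈ ℝ^d, Σ := L L^T, and α(y) := L y + c. Let N_d(x; m, C) denote the Gaussian probability density at x with mean m and covariance C. Define the independent Metropolis–Hastings kernel M_{ρ,c,Σ}(x, A) := ∫_A β(x, x̃) N_d(c, σ²Σ)(dx̃) + 1_A(x)(1 − ∫_{ℝ^d} β(x, x̃) N_d(c, σ²Σ)(dx̃)) with acceptance probability β(x, x̃) := min{1, (ρ(x̃) N_d(x; c, σ²Σ)) / (ρ(x) N_d(x̃; c, σ²Σ))}, and define M_{ρ∘α, 0, I_d} by the same formulas with ρ replaced by ρ∘α, mean 0 and covariance σ² I_d. Then for all x ∈ ℝ^d and Borel A ⊆ ℝ^d, M_{ρ,c,Σ}(x, A) = M_{ρ∘α, 0, I_d}(α^{-1}(x), α^{-1}(A)). -/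

import Mathlib

open MeasureTheory Matrix

/-- The multivariate Gaussian density `N_d(x; m, C)` on `ℝ^d` with mean `m` and
(positive definite) covariance `C`. -/
noncomputable def gaussDensity (d : ℕ) (m : Fin d → ℝ)
    (C : Matrix (Fin d) (Fin d) ℝ) (x : Fin d → ℝ) : ℝ :=
  (2 * Real.pi) ^ (-(d : ℝ) / 2) * C.det ^ (-(1 : ℝ) / 2) *
    Real.exp (-((x - m) ⬝ᵥ C⁻¹.mulVec (x - m)) / 2)

/-- The multivariate Gaussian measure `N_d(m, C)` on `ℝ^d`. -/
noncomputable def gaussMeasure (d : ℕ) (m : Fin d → ℝ)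
    (C : Matrix (Fin d) (Fin d) ℝ) : Measure (Fin d → ℝ) :=
  volume.withDensity fun x => ENNReal.ofReal (gaussDensity d m C x)

/-- The Metropolis–Hastings acceptance probability
`β_{ρ,c,Σ}(x, x̃) = min{1, ρ(x̃) N_d(x; c, σ²Σ) / (ρ(x) N_d(x̃; c, σ²Σ))}` of
independent Metropolis–Hastings with Gaussian proposal. -/
noncomputable def imhAccept (d : ℕ) (σ : ℝ) (ρ : (Fin d → ℝ) → ℝ)
    (c : Fin d → ℝ) (C : Matrix (Fin d) (Fin d) ℝ) (x z : Fin d → ℝ) : ℝ :=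
  min 1 ((ρ z * gaussDensity d c (σ ^ 2 • C) x) /
    (ρ x * gaussDensity d c (σ ^ 2 • C) z))

/-- The value `M_{ρ,c,Σ}(x, A)` of the independent Metropolis–Hastings kernel with
target density `ρ` and Gaussian proposal `N_d(c, σ²C)`. -/
noncomputable def imhKernelVal (d : ℕ) (σ : ℝ) (ρ : (Fin d → ℝ) → ℝ)
    (c : Fin d → ℝ) (C : Matrix (Fin d) (Fin d) ℝ)
    (x : Fin d → ℝ) (A : Set (Fin d → ℝ)) : ℝ :=
  (∫ z in A, imhAccept d σ ρ c C x z ∂(gaussMeasure d c (σ ^ 2 • C))) +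
    Set.indicator A (fun _ => (1 : ℝ)) x *
      (1 - ∫ z, imhAccept d σ ρ c C x z ∂(gaussMeasure d c (σ ^ 2 • C)))

lemma gaussDensity_comp (d : ℕ) (σ : ℝ) (hσ : 0 < σ)
    (L : Matrix (Fin d) (Fin d) ℝ) (hL : IsUnit L.det) (c : Fin d → ℝ)
    (S : Matrix (Fin d) (Fin d) ℝ) (hS : S = L * Lᵀ) (y : Fin d → ℝ) :
    gaussDensity d c (σ ^ 2 • S) (L.mulVec y + c) =
      |L.det|⁻¹ * gaussDensity d 0 (σ ^ 2 • (1 : Matrix (Fin d) (Fin d) ℝ)) y := by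
  have hdetL : L.det ≠ 0 := hL.ne_zero
  have hSdet : IsUnit S.det := by
    rw [hS, det_mul, det_transpose]; exact hL.mul hL
  have hσ2 : (0:ℝ) < σ ^ 2 := by positivity
  -- determinants
  have hdet1 : (σ ^ 2 • S).det = (σ ^ 2) ^ d * L.det ^ 2 := by
    rw [det_smul, hS, det_mul, det_transpose, Fintype.card_fin]; ring
  have hdet2 : (σ ^ 2 • (1 : Matrix (Fin d) (Fin d) ℝ)).det = (σ ^ 2) ^ d := by
    rw [det_smul, det_one, Fintype.card_fin, mul_one]
  have hrpow : ((σ ^ 2) ^ d * L.det ^ 2 : ℝ) ^ (-(1:ℝ)/2) =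
      ((σ ^ 2) ^ d : ℝ) ^ (-(1:ℝ)/2) * |L.det|⁻¹ := by
    rw [show (L.det ^ 2 : ℝ) = |L.det| ^ 2 from (sq_abs _).symm,
      Real.mul_rpow (by positivity) (by positivity)]
    congr 1
    rw [← Real.rpow_natCast |L.det| 2, ← Real.rpow_mul (abs_nonneg _)]
    norm_num
    exact Real.rpow_neg_one _
  -- inverses
  have hinv1 : (σ ^ 2 • S)⁻¹ = (σ ^ 2)⁻¹ • S⁻¹ := by
    apply Matrix.inv_eq_right_inv
    rw [Matrix.smul_mul, Matrix.mul_smul, Matrix.mul_nonsing_inv _ hSdet, smul_smul,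
      mul_inv_cancel₀ hσ2.ne', one_smul]
  have hinv2 : (σ ^ 2 • (1 : Matrix (Fin d) (Fin d) ℝ))⁻¹ = (σ ^ 2)⁻¹ • 1 := by
    apply Matrix.inv_eq_right_inv
    rw [Matrix.smul_mul, Matrix.mul_smul, Matrix.one_mul, smul_smul,
      mul_inv_cancel₀ hσ2.ne', one_smul]
  -- quadratic form
  have hquad : (L.mulVec y + c - c) ⬝ᵥ (σ ^ 2 • S)⁻¹.mulVec (L.mulVec y + c - c) =
      (σ ^ 2)⁻¹ * (y ⬝ᵥ y) := by
    have h1 : L.mulVec y + c - c = L.mulVec y := by abel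
    rw [h1, hinv1, hS, Matrix.mul_inv_rev, Matrix.smul_mulVec,
      dotProduct_smul, smul_eq_mul]
    congr 1
    rw [Matrix.mulVec_mulVec, Matrix.mul_assoc, Matrix.nonsing_inv_mul _ hL, Matrix.mul_one,
      ← Matrix.transpose_nonsing_inv, Matrix.dotProduct_mulVec, Matrix.vecMul_transpose,
      Matrix.mulVec_mulVec, Matrix.nonsing_inv_mul _ hL, Matrix.one_mulVec]
  have hquad2 : (y - 0) ⬝ᵥ (σ ^ 2 • (1 : Matrix (Fin d) (Fin d) ℝ))⁻¹.mulVec (y - 0) =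
      (σ ^ 2)⁻¹ * (y ⬝ᵥ y) := by
    rw [sub_zero, hinv2, Matrix.smul_mulVec, Matrix.one_mulVec, dotProduct_smul,
      smul_eq_mul]
  rw [gaussDensity, gaussDensity, hdet1, hdet2, hrpow, hquad, hquad2]
  ring

lemma gaussDensity_continuous (d : ℕ) (m : Fin d → ℝ) (C : Matrix (Fin d) (Fin d) ℝ) :
    Continuous (gaussDensity d m C) := by
  unfold gaussDensity
  refine (continuous_const.mul ?_)
  refine Real.continuous_exp.comp (Continuous.div_const (Continuous.neg ?_) 2)
  unfold dotProduct Matrix.mulVec dotProduct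
  refine continuous_finset_sum _ fun i _ => Continuous.mul ?_ ?_
  · exact (continuous_apply i).sub continuous_const
  · exact continuous_finset_sum _ fun j _ => continuous_const.mul
      ((continuous_apply j).sub continuous_const)

lemma map_withDensity_equiv {X Y : Type*} [MeasurableSpace X] [MeasurableSpace Y]
    (e : X ≃ᵐ Y) (μ : Measure X) (g : Y → ENNReal) (hg : Measurable g) :
    Measure.map e (μ.withDensity (g ∘ e)) = (Measure.map e μ).withDensity g := by
  ext s hs
  rw [Measure.map_apply e.measurable hs, withDensity_apply _ hs,
    withDensity_apply _ (e.measurable hs), setLIntegral_map hs hg e.measurable]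
  rfl

noncomputable def affEquiv (d : ℕ) (L : Matrix (Fin d) (Fin d) ℝ) (hL : IsUnit L.det)
    (c : Fin d → ℝ) : (Fin d → ℝ) ≃ᵐ (Fin d → ℝ) where
  toFun y := L.mulVec y + c
  invFun z := L⁻¹.mulVec (z - c)
  left_inv y := by
    simp [Matrix.mulVec_mulVec, Matrix.nonsing_inv_mul _ hL]
  right_inv z := by
    simp [Matrix.mulVec_mulVec, Matrix.mul_nonsing_inv _ hL]
  measurable_toFun := by
    have : Continuous fun y : Fin d → ℝ => L.mulVec y + c := by
      have h1 : Continuous fun y : Fin d → ℝ => L.mulVec y := by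
        have := LinearMap.continuous_on_pi (Matrix.toLin' L)
        convert this using 1; funext y; simp [Matrix.toLin'_apply]
      exact h1.add continuous_const
    exact this.measurable
  measurable_invFun := by
    have : Continuous fun z : Fin d → ℝ => L⁻¹.mulVec (z - c) := by
      have h1 : Continuous fun y : Fin d → ℝ => L⁻¹.mulVec y := by
        have := LinearMap.continuous_on_pi (Matrix.toLin' L⁻¹)
        convert this using 1; funext y; simp [Matrix.toLin'_apply]
      exact h1.comp (continuous_id.sub continuous_const)
    exact this.measurable

lemma gaussMeasure_map (d : ℕ) (σ : ℝ) (hσ : 0 < σ)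
    (L : Matrix (Fin d) (Fin d) ℝ) (hL : IsUnit L.det) (c : Fin d → ℝ)
    (S : Matrix (Fin d) (Fin d) ℝ) (hS : S = L * Lᵀ) :
    gaussMeasure d c (σ ^ 2 • S) =
      Measure.map (affEquiv d L hL c) (gaussMeasure d 0 (σ ^ 2 • 1)) := by
  set e := affEquiv d L hL c with he
  have hdetL : L.det ≠ 0 := hL.ne_zero
  have habs : (0:ℝ) < |L.det| := abs_pos.2 hdetL
  set f : (Fin d → ℝ) → ENNReal :=
    fun z => ENNReal.ofReal (gaussDensity d c (σ ^ 2 • S) z) with hf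
  have hfmeas : Measurable f :=
    (ENNReal.measurable_ofReal.comp (gaussDensity_continuous d c _).measurable)
  set h : (Fin d → ℝ) → ENNReal := (ENNReal.ofReal |L.det|) • f with hh
  have hhmeas : Measurable h := hfmeas.const_smul _
  have hcomp : (fun y => ENNReal.ofReal (gaussDensity d 0
      (σ ^ 2 • (1 : Matrix (Fin d) (Fin d) ℝ)) y)) = h ∘ e := by
    funext y
    have hey : (e y : Fin d → ℝ) = L.mulVec y + c := rfl
    simp only [hh, hf, Function.comp, hey, Pi.smul_apply, smul_eq_mul]
    rw [gaussDensity_comp d σ hσ L hL c S hS y, ← ENNReal.ofReal_mul habs.le,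
      ← mul_assoc, mul_inv_cancel₀ habs.ne', one_mul]
  have hmapvol : Measure.map e volume =
      ENNReal.ofReal |L.det|⁻¹ • (volume : Measure (Fin d → ℝ)) := by
    have hco : (⇑e) = (fun v : Fin d → ℝ => v + c) ∘ ⇑(Matrix.toLin' L) := by
      funext y
      simp [he, affEquiv, Matrix.toLin'_apply]
    rw [hco, ← Measure.map_map (measurable_add_const c)
        (Matrix.toLin' L).continuous_of_finiteDimensional.measurable,
      Real.map_matrix_volume_pi_eq_smul_volume_pi hdetL, Measure.map_smul,
      map_add_right_eq_self]
    rw [abs_inv]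
  rw [gaussMeasure, gaussMeasure, hcomp, map_withDensity_equiv e volume h hhmeas, hmapvol,
    withDensity_smul_measure, hh, withDensity_smul _ hfmeas, smul_smul,
    ← ENNReal.ofReal_mul (by positivity), inv_mul_cancel₀ habs.ne', ENNReal.ofReal_one, one_smul]


/-- ATT-friendliness of independent Metropolis–Hastings with Gaussian
proposal: with `Σ = L Lᵀ` and `α(y) = L y + c`,
`M_{ρ,c,Σ}(x, A) = M_{ρ∘α, 0, I}(α⁻¹(x), α⁻¹(A))`. -/
theorem imh_att_friendly
    (d : ℕ) (hd : 1 ≤ d) (σ : ℝ) (hσ : 0 < σ)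
    (ρ : (Fin d → ℝ) → ℝ) (hρ_meas : Measurable ρ) (hρ_pos : ∀ x, 0 < ρ x)
    (L : Matrix (Fin d) (Fin d) ℝ) (hL : IsUnit L.det) (c : Fin d → ℝ)
    (S : Matrix (Fin d) (Fin d) ℝ) (hS : S = L * Lᵀ)
    (x : Fin d → ℝ) (A : Set (Fin d → ℝ)) (hA : MeasurableSet A) :
    imhKernelVal d σ ρ c S x A =
      imhKernelVal d σ (fun y => ρ (L.mulVec y + c)) 0 1
        (L⁻¹.mulVec (x - c)) ((fun y => L.mulVec y + c) ⁻¹' A) := by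
  set e := affEquiv d L hL c with he
  have hee : ⇑e = fun y => L.mulVec y + c := rfl
  set x' : Fin d → ℝ := L⁻¹.mulVec (x - c) with hx'
  have hex' : L.mulVec x' + c = x := by
    rw [hx', Matrix.mulVec_mulVec, Matrix.mul_nonsing_inv _ hL, Matrix.one_mulVec,
      sub_add_cancel]
  have habs : (0:ℝ) < |L.det|⁻¹ := by
    simp [abs_pos, hL.ne_zero]
  -- pointwise acceptance identity
  have haccept : ∀ y, imhAccept d σ ρ c S x (e y) =
      imhAccept d σ (fun y => ρ (L.mulVec y + c)) 0 1 x' y := by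
    intro y
    have h1 : gaussDensity d c (σ ^ 2 • S) (e y) =
        |L.det|⁻¹ * gaussDensity d 0 (σ ^ 2 • 1) y := by
      rw [hee]; exact gaussDensity_comp d σ hσ L hL c S hS y
    have h2 : gaussDensity d c (σ ^ 2 • S) x =
        |L.det|⁻¹ * gaussDensity d 0 (σ ^ 2 • 1) x' := by
      conv_lhs => rw [← hex']
      exact gaussDensity_comp d σ hσ L hL c S hS x'
    unfold imhAccept
    rw [h1, h2, hee]
    simp only
    rw [show ρ (L.mulVec y + c) * (|L.det|⁻¹ * gaussDensity d 0 (σ ^ 2 • 1) x') =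
        |L.det|⁻¹ * (ρ (L.mulVec y + c) * gaussDensity d 0 (σ ^ 2 • 1) x') by ring,
      show ρ x * (|L.det|⁻¹ * gaussDensity d 0 (σ ^ 2 • 1) y) =
        |L.det|⁻¹ * (ρ x * gaussDensity d 0 (σ ^ 2 • 1) y) by ring,
      mul_div_mul_left _ _ habs.ne', ← hex']
  -- measure identity
  have hmap := gaussMeasure_map d σ hσ L hL c S hS
  unfold imhKernelVal
  rw [hmap, ← he, e.measurableEmbedding.setIntegral_map, e.measurableEmbedding.integral_map]
  have hpre : ⇑e ⁻¹' A = (fun y => L.mulVec y + c) ⁻¹' A := rfl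
  have hind : Set.indicator A (fun _ => (1:ℝ)) x =
      Set.indicator ((fun y => L.mulVec y + c) ⁻¹' A) (fun _ => (1:ℝ)) x' := by
    have hmem : x' ∈ (fun y => L.mulVec y + c) ⁻¹' A ↔ x ∈ A := by
      rw [Set.mem_preimage]; rw [hex']
    by_cases hxA : x ∈ A
    · rw [Set.indicator_of_mem hxA, Set.indicator_of_mem (hmem.2 hxA)]
    · rw [Set.indicator_of_notMem hxA, Set.indicator_of_notMem (fun hc => hxA (hmem.1 hc))]
  rw [hpre, hind]
  have h1 : (∫ y in (fun y => L.mulVec y + c) ⁻¹' A, imhAccept d σ ρ c S x (e y)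
        ∂(gaussMeasure d 0 (σ ^ 2 • 1))) =
      ∫ y in (fun y => L.mulVec y + c) ⁻¹' A,
        imhAccept d σ (fun y => ρ (L.mulVec y + c)) 0 1 x' y
        ∂(gaussMeasure d 0 (σ ^ 2 • 1)) :=
    integral_congr_ae (ae_of_all _ fun y => haccept y)
  have h2 : (∫ y, imhAccept d σ ρ c S x (e y) ∂(gaussMeasure d 0 (σ ^ 2 • 1))) =
      ∫ y, imhAccept d σ (fun y => ρ (L.mulVec y + c)) 0 1 x' y
        ∂(gaussMeasure d 0 (σ ^ 2 • 1)) :=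
    integral_congr_ae (ae_of_all _ fun y => haccept y)
  rw [h1, h2]
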